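/- arXiv:2003.02432 — 3 statements merged into one kernel-verified Lean document; each statement's English description precedes it below -/
import Mathlib

section
/- Let F and G be functions on [a,b] that each agree almost everywhere with a non-decreasing function. If their generalized inverses F⁻¹ and G⁻¹ agree almost everywhere, then F = G almost everywhere. -/
open MeasureTheory Set

/-- Basic properties of the generalized inverse of a monotone function. -/
lemma stmt_1_aux (a b : ℝ) (hab : a ≤ b) (H Hinv : ℝ → ℝ)
    (hH : MonotoneOn H (Set.Icc a b))
    (hHinv : ∀ x, Hinv x = sSup (insert a {t ∈ Set.Icc a b | H t ≤ x})) :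
    (∀ t ∈ Set.Icc a b, ∀ x, H t ≤ x → t ≤ Hinv x) ∧
    (∀ t ∈ Set.Icc a b, ∀ x, t < Hinv x → H t ≤ x) := by
  constructor
  · intro t ht x hx
    rw [hHinv]
    refine le_csSup ⟨b, ?_⟩ (Set.mem_insert_iff.2 (Or.inr ⟨ht, hx⟩))
    rintro s hs
    rcases Set.mem_insert_iff.1 hs with rfl | ⟨hs1, _⟩
    · exact hab
    · exact hs1.2
  · intro t ht x htx
    rw [hHinv] at htx
    obtain ⟨s, hs, hts⟩ := exists_lt_of_lt_csSup ⟨a, Set.mem_insert _ _⟩ htx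
    rcases Set.mem_insert_iff.1 hs with rfl | ⟨hs1, hs2⟩
    · exact absurd ht.1 (not_le.2 hts)
    · exact (hH ht hs1 hts.le).trans hs2

/-- Two nonempty, bounded-below, upward-closed subsets of `ℝ` that agree outside a
null set have the same infimum. -/
lemma stmt_1_inf_eq (S S' N : Set ℝ) (hN : volume N = 0)
    (hS : S.Nonempty) (hS' : S'.Nonempty)
    (hSb : BddBelow S) (hS'b : BddBelow S')
    (hSu : ∀ x ∈ S, ∀ y, x ≤ y → y ∈ S) (hS'u : ∀ x ∈ S', ∀ y, x ≤ y → y ∈ S')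
    (hdiff : ∀ x ∉ N, (x ∈ S ↔ x ∈ S')) : sInf S = sInf S' := by
  by_contra h
  wlog hlt : sInf S < sInf S' generalizing S S'
  · exact this S' S hS' hS hS'b hSb hS'u hSu (fun x hx => (hdiff x hx).symm) (Ne.symm h)
      ((Ne.lt_or_gt h).resolve_left hlt)
  have hsub : Set.Ioo (sInf S) (sInf S') ⊆ N := by
    intro x hx
    by_contra hxN
    have hxS : x ∈ S := by
      obtain ⟨s, hs, hsx⟩ := exists_lt_of_csInf_lt hS hx.1
      exact hSu s hs x hsx.le
    have hxS' : x ∈ S' := (hdiff x hxN).1 hxS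
    exact absurd (csInf_le hS'b hxS') (not_le.2 hx.2)
  have h0 : volume (Set.Ioo (sInf S) (sInf S')) = 0 := measure_mono_null hsub hN
  rw [Real.volume_Ioo, ENNReal.ofReal_eq_zero] at h0
  linarith

/-- If F, G on [a,b] each agree a.e. with non-decreasing functions F̂, Ĝ, and their
generalized inverses (defined via F̂, Ĝ, with value a when the set is empty) agree a.e.,
then F = G a.e. on [a,b]. -/
theorem stmt_1 (a b : ℝ) (hab : a ≤ b) (F G Fhat Ghat : ℝ → ℝ)
    (hFhat : MonotoneOn Fhat (Set.Icc a b)) (hGhat : MonotoneOn Ghat (Set.Icc a b))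
    (hFae : ∀ᵐ t ∂(volume.restrict (Set.Icc a b)), F t = Fhat t)
    (hGae : ∀ᵐ t ∂(volume.restrict (Set.Icc a b)), G t = Ghat t)
    (Finv Ginv : ℝ → ℝ)
    (hFinv : ∀ x, Finv x = sSup (insert a {t ∈ Set.Icc a b | Fhat t ≤ x}))
    (hGinv : ∀ x, Ginv x = sSup (insert a {t ∈ Set.Icc a b | Ghat t ≤ x}))
    (hinv : ∀ᵐ x ∂(volume : Measure ℝ), Finv x = Ginv x) :
    ∀ᵐ t ∂(volume.restrict (Set.Icc a b)), F t = G t := by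
  obtain ⟨hF1, hF2⟩ := stmt_1_aux a b hab Fhat Finv hFhat hFinv
  obtain ⟨hG1, hG2⟩ := stmt_1_aux a b hab Ghat Ginv hGhat hGinv
  set φF : ℝ → ℝ := fun t => sInf {x | t < Finv x} with hφF
  set φG : ℝ → ℝ := fun t => sInf {x | t < Ginv x} with hφG
  have haa : a ∈ Set.Icc a b := ⟨le_refl a, hab⟩
  have hbb : b ∈ Set.Icc a b := ⟨hab, le_refl b⟩
  -- boundedness below of the sets {x | t < Hinv x}
  have hFlb : ∀ t, a ≤ t → BddBelow {x | t < Finv x} :=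
    fun t ht => ⟨Fhat a, fun x hx => hF2 a haa x (lt_of_le_of_lt ht hx)⟩
  have hGlb : ∀ t, a ≤ t → BddBelow {x | t < Ginv x} :=
    fun t ht => ⟨Ghat a, fun x hx => hG2 a haa x (lt_of_le_of_lt ht hx)⟩
  -- nonemptiness
  have hFne : ∀ t, t < b → ({x | t < Finv x}).Nonempty :=
    fun t ht => ⟨Fhat b, lt_of_lt_of_le ht (hF1 b hbb (Fhat b) le_rfl)⟩
  have hGne : ∀ t, t < b → ({x | t < Ginv x}).Nonempty :=
    fun t ht => ⟨Ghat b, lt_of_lt_of_le ht (hG1 b hbb (Ghat b) le_rfl)⟩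
  -- H t ≤ φ t
  have hFlow : ∀ t ∈ Set.Ico a b, Fhat t ≤ φF t :=
    fun t ht => le_csInf (hFne t ht.2) (fun x hx => hF2 t ⟨ht.1, ht.2.le⟩ x hx)
  have hGlow : ∀ t ∈ Set.Ico a b, Ghat t ≤ φG t :=
    fun t ht => le_csInf (hGne t ht.2) (fun x hx => hG2 t ⟨ht.1, ht.2.le⟩ x hx)
  -- φ t ≤ H s for s > t
  have hFup : ∀ t ∈ Set.Ico a b, ∀ s ∈ Set.Icc a b, t < s → φF t ≤ Fhat s :=
    fun t ht s hs hts => csInf_le (hFlb t ht.1) (lt_of_lt_of_le hts (hF1 s hs _ le_rfl))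
  have hGup : ∀ t ∈ Set.Ico a b, ∀ s ∈ Set.Icc a b, t < s → φG t ≤ Ghat s :=
    fun t ht s hs hts => csInf_le (hGlb t ht.1) (lt_of_lt_of_le hts (hG1 s hs _ le_rfl))
  -- the null set where the inverses disagree
  have hN : volume {x | Finv x ≠ Ginv x} = 0 := by
    have := ae_iff.mp hinv
    simpa using this
  -- monotonicity of the inverses (upward closedness)
  have hFmono : Monotone Finv := by
    intro x y hxy
    rw [hFinv x, hFinv y]
    refine csSup_le_csSup ⟨b, ?_⟩ ⟨a, Set.mem_insert _ _⟩ ?_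
    · rintro s hs
      rcases Set.mem_insert_iff.1 hs with rfl | ⟨hs1, _⟩
      · exact hab
      · exact hs1.2
    · rintro s hs
      rcases Set.mem_insert_iff.1 hs with rfl | ⟨hs1, hs2⟩
      · exact Set.mem_insert _ _
      · exact Set.mem_insert_iff.2 (Or.inr ⟨hs1, hs2.trans hxy⟩)
  have hGmono : Monotone Ginv := by
    intro x y hxy
    rw [hGinv x, hGinv y]
    refine csSup_le_csSup ⟨b, ?_⟩ ⟨a, Set.mem_insert _ _⟩ ?_
    · rintro s hs
      rcases Set.mem_insert_iff.1 hs with rfl | ⟨hs1, _⟩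
      · exact hab
      · exact hs1.2
    · rintro s hs
      rcases Set.mem_insert_iff.1 hs with rfl | ⟨hs1, hs2⟩
      · exact Set.mem_insert _ _
      · exact Set.mem_insert_iff.2 (Or.inr ⟨hs1, hs2.trans hxy⟩)
  -- the two "right continuous reconstructions" agree everywhere on [a,b)
  have hφeq : ∀ t ∈ Set.Ico a b, φF t = φG t := by
    intro t ht
    refine stmt_1_inf_eq _ _ _ hN (hFne t ht.2) (hGne t ht.2) (hFlb t ht.1) (hGlb t ht.1)
      ?_ ?_ ?_
    · exact fun x hx y hxy => lt_of_lt_of_le hx (hFmono hxy)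
    · exact fun x hx y hxy => lt_of_lt_of_le hx (hGmono hxy)
    · intro x hx
      simp only [Set.mem_setOf_eq, not_not] at hx
      simp [Set.mem_setOf_eq, hx]
  -- the bad sets are countable
  have hBF : ({t ∈ Set.Ico a b | Fhat t ≠ φF t}).Countable := by
    refine Set.PairwiseDisjoint.countable_of_isOpen
      (s := fun t => Set.Ioo (Fhat t) (φF t)) ?_ (fun t _ => isOpen_Ioo) ?_
    · intro t1 h1 t2 h2 hne
      rcases lt_or_gt_of_ne hne with hlt | hlt
      · refine Set.disjoint_left.2 fun x hx1 hx2 => ?_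
        have : φF t1 ≤ Fhat t2 := hFup t1 h1.1 t2 ⟨h1.1.1.trans hlt.le, h2.1.2.le⟩ hlt
        exact absurd (hx1.2.trans_le this) (not_lt.2 hx2.1.le)
      · refine Set.disjoint_left.2 fun x hx1 hx2 => ?_
        have : φF t2 ≤ Fhat t1 := hFup t2 h2.1 t1 ⟨h2.1.1.trans hlt.le, h1.1.2.le⟩ hlt
        exact absurd (hx2.2.trans_le this) (not_lt.2 hx1.1.le)
    · intro t ht
      exact Set.nonempty_Ioo.2 (lt_of_le_of_ne (hFlow t ht.1) ht.2)
  have hBG : ({t ∈ Set.Ico a b | Ghat t ≠ φG t}).Countable := by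
    refine Set.PairwiseDisjoint.countable_of_isOpen
      (s := fun t => Set.Ioo (Ghat t) (φG t)) ?_ (fun t _ => isOpen_Ioo) ?_
    · intro t1 h1 t2 h2 hne
      rcases lt_or_gt_of_ne hne with hlt | hlt
      · refine Set.disjoint_left.2 fun x hx1 hx2 => ?_
        have : φG t1 ≤ Ghat t2 := hGup t1 h1.1 t2 ⟨h1.1.1.trans hlt.le, h2.1.2.le⟩ hlt
        exact absurd (hx1.2.trans_le this) (not_lt.2 hx2.1.le)
      · refine Set.disjoint_left.2 fun x hx1 hx2 => ?_
        have : φG t2 ≤ Ghat t1 := hGup t2 h2.1 t1 ⟨h2.1.1.trans hlt.le, h1.1.2.le⟩ hlt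
        exact absurd (hx2.2.trans_le this) (not_lt.2 hx1.1.le)
    · intro t ht
      exact Set.nonempty_Ioo.2 (lt_of_le_of_ne (hGlow t ht.1) ht.2)
  -- assemble
  have hCnull : volume ({b} ∪ {t ∈ Set.Ico a b | Fhat t ≠ φF t}
      ∪ {t ∈ Set.Ico a b | Ghat t ≠ φG t}) = 0 :=
    (((Set.countable_singleton b).union hBF).union hBG).measure_zero _
  have hC : ∀ᵐ t ∂(volume.restrict (Set.Icc a b)),
      t ∉ ({b} ∪ {t ∈ Set.Ico a b | Fhat t ≠ φF t} ∪ {t ∈ Set.Ico a b | Ghat t ≠ φG t}) :=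
    ae_restrict_of_ae (measure_eq_zero_iff_ae_notMem.mp hCnull)
  have hmem : ∀ᵐ t ∂(volume.restrict (Set.Icc a b)), t ∈ Set.Icc a b :=
    ae_restrict_mem measurableSet_Icc
  filter_upwards [hFae, hGae, hC, hmem] with t hFt hGt htC htm
  simp only [Set.mem_union, Set.mem_singleton_iff, Set.mem_setOf_eq, not_or, not_and,
    not_not] at htC
  have htb : t ∈ Set.Ico a b := ⟨htm.1, lt_of_le_of_ne htm.2 htC.1.1⟩
  rw [hFt, hGt, htC.1.2 htb, hφeq t htb, htC.2 htb]
end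

section
/- For z in the open unit disk, the identity Σ_{n≥1} (−8i/π)·(n/(1 − 4n²))·zⁿ = (i/π)·{ Log((1 + √z)/(1 − √z))·(√z + 1/√z) − 2 } holds, where √z is a branch of the square root analytic on the disk slit along the negative reals, for z not on the slit and z ≠ 0. -/
open Complex Real

/-- For z in the open unit disk off the negative-real slit and z ≠ 0, with √z the
principal square root,
Σ_{n≥1} (−8i/π)(n/(1 − 4n²)) zⁿ = (i/π)(Log((1+√z)/(1−√z))·(√z + 1/√z) − 2). -/
theorem stmt_9 (z : ℂ) (hz : z ∈ Metric.ball (0 : ℂ) 1) (hz0 : z ≠ 0)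
    (hslit : ¬(z.im = 0 ∧ z.re ≤ 0)) :
    HasSum (fun n : ℕ =>
        (-8 * Complex.I / π) * (((n : ℂ) + 1) / (1 - 4 * ((n : ℂ) + 1) ^ 2)) * z ^ (n + 1))
      ((Complex.I / π) *
        (Complex.log ((1 + z ^ (1 / 2 : ℂ)) / (1 - z ^ (1 / 2 : ℂ)))
            * (z ^ (1 / 2 : ℂ) + 1 / z ^ (1 / 2 : ℂ)) - 2)) := by
  set w := z ^ (1/2 : ℂ) with hw
  have hw2 : w ^ 2 = z := by
    rw [hw, sq, ← cpow_add _ _ hz0]; norm_num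
  have hw0 : w ≠ 0 := by
    intro h; rw [h] at hw2; simp at hw2; exact hz0 hw2.symm
  have hwn : ‖w‖ < 1 := by
    have h1 : ‖z‖ < 1 := by simpa using hz
    have h2 : ‖w‖ ^ 2 = ‖z‖ := by rw [← hw2]; simp [norm_pow]
    nlinarith [norm_nonneg w]
  have hrew : |w.re| < 1 := lt_of_le_of_lt (Complex.abs_re_le_norm w) hwn
  have hre1 : 0 < (1 + w).re := by simp [Complex.add_re]; linarith [abs_lt.mp hrew]
  have hre2 : 0 < (1 - w).re := by simp [Complex.sub_re]; linarith [abs_lt.mp hrew]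
  have hne1 : (1 : ℂ) + w ≠ 0 := fun h => by simp [h] at hre1
  have hne2 : (1 : ℂ) - w ≠ 0 := fun h => by simp [h] at hre2
  have harg1 : |(1 + w).arg| < π/2 := abs_arg_lt_pi_div_two_iff.mpr (Or.inl hre1)
  have harg2 : |(1 - w).arg| < π/2 := abs_arg_lt_pi_div_two_iff.mpr (Or.inl hre2)
  set L := Complex.log (1 + w) - Complex.log (1 - w) with hL
  have hsplit : Complex.log ((1 + w) / (1 - w)) = L := by
    have harg3 : |(1 - w)⁻¹.arg| < π/2 := by rw [Complex.abs_arg_inv]; exact harg2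
    have hargne : (1 - w).arg ≠ π := by
      intro h
      rw [h, abs_of_pos Real.pi_pos] at harg2
      linarith [Real.pi_pos]
    have hmem : (1 + w).arg + (1 - w)⁻¹.arg ∈ Set.Ioc (-π) π := by
      have ha := abs_lt.mp harg1
      have hb := abs_lt.mp harg3
      constructor <;> [linarith; linarith]
    rw [div_eq_mul_inv, Complex.log_mul hne1 (inv_ne_zero hne2) hmem,
      Complex.log_inv _ hargne, hL]
    ring
  -- the two log series
  have h1 : HasSum (fun n : ℕ => w ^ n / n) (-Complex.log (1 - w)) :=
    Complex.hasSum_taylorSeries_neg_log hwn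
  have h2 : HasSum (fun n : ℕ => (-w) ^ n / n) (-Complex.log (1 + w)) := by
    have := Complex.hasSum_taylorSeries_neg_log (z := -w) (by simpa using hwn)
    simpa [sub_neg_eq_add] using this
  have h3 : HasSum (fun n : ℕ => (w ^ n / n - (-w) ^ n / n) / 2) (L / 2) := by
    have := (h1.sub h2).div_const 2
    rw [hL]
    convert this using 2
    · rfl
    ring
  -- extract odd terms
  have h4 : HasSum (fun k : ℕ => w ^ (2 * k + 1) / ((2 * k + 1 : ℕ) : ℂ)) (L / 2) := by
    have hinj : Function.Injective (fun k : ℕ => 2 * k + 1) := by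
      intro a b h; dsimp only at h; omega
    rw [← Function.Injective.hasSum_iff hinj (f := fun n : ℕ => (w ^ n / n - (-w) ^ n / n) / 2)] at h3
    · convert h3 using 2 with k
      simp only [Function.comp]
      rw [neg_pow, Odd.neg_one_pow ⟨k, rfl⟩]
      push_cast
      ring
    · intro n hn
      have hev : Even n := by
        by_contra hodd
        rw [Nat.not_even_iff_odd] at hodd
        obtain ⟨k, hk⟩ := hodd
        exact hn ⟨k, hk.symm⟩
      rw [neg_pow, hev.neg_one_pow]
      ring
  have hU : HasSum (fun k : ℕ => 2 * w ^ (2 * k + 1) / ((2 * k + 1 : ℕ) : ℂ)) L := by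
    have := h4.mul_left 2
    convert this using 2 with k
    · rfl
    · ring
    · ring
  have hshift : HasSum (fun k : ℕ => 2 * w ^ (2 * (k + 1) + 1) / ((2 * (k + 1) + 1 : ℕ) : ℂ))
      (L - 2 * w) := by
    rw [show (fun k : ℕ => 2 * w ^ (2 * (k + 1) + 1) / ((2 * (k + 1) + 1 : ℕ) : ℂ))
        = (fun k : ℕ => (fun m : ℕ => 2 * w ^ (2 * m + 1) / ((2 * m + 1 : ℕ) : ℂ)) (k + 1))
        from rfl,
      hasSum_nat_add_iff (f := fun m : ℕ => 2 * w ^ (2 * m + 1) / ((2 * m + 1 : ℕ) : ℂ)) 1]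
    convert hU using 1
    · rfl
    simp only [Finset.sum_range_one]
    norm_num
  have hA := hU.mul_left w
  have hB := hshift.mul_left w⁻¹
  have hC := (hA.add hB).mul_left (Complex.I / π)
  convert hC using 1
  · rfl
  · funext n
    show (-8 * Complex.I / (π : ℂ)) * (((n : ℂ) + 1) / (1 - 4 * ((n : ℂ) + 1) ^ 2)) * z ^ (n + 1)
        = Complex.I / (π : ℂ) * (w * (2 * w ^ (2 * n + 1) / ((2 * n + 1 : ℕ) : ℂ))
            + w⁻¹ * (2 * w ^ (2 * (n + 1) + 1) / ((2 * (n + 1) + 1 : ℕ) : ℂ)))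
    have hcast1 : ((2 * n + 1 : ℕ) : ℂ) = 2 * (n : ℂ) + 1 := by push_cast; ring
    have hcast2 : ((2 * (n + 1) + 1 : ℕ) : ℂ) = 2 * (n : ℂ) + 3 := by push_cast; ring
    have hc1 : ((2 * n + 1 : ℕ) : ℂ) ≠ 0 := Nat.cast_ne_zero.mpr (by omega)
    have he1 : 2 * (n : ℂ) + 1 ≠ 0 := hcast1 ▸ hc1
    have hc2 : ((2 * (n + 1) + 1 : ℕ) : ℂ) ≠ 0 := Nat.cast_ne_zero.mpr (by omega)
    have he2 : 2 * (n : ℂ) + 3 ≠ 0 := hcast2 ▸ hc2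
    have hπ : (π : ℂ) ≠ 0 := Complex.ofReal_ne_zero.mpr Real.pi_ne_zero
    have hstep : w⁻¹ * (2 * w ^ (2 * (n + 1) + 1) / (2 * (n : ℂ) + 3))
        = 2 * w ^ (2 * n + 2) / (2 * (n : ℂ) + 3) := by
      rw [show 2 * (n + 1) + 1 = (2 * n + 2) + 1 from by ring, pow_succ]
      field_simp
    have h1 : (1 : ℂ) - 4 * ((n : ℂ) + 1) ^ 2
        = -((2 * (n : ℂ) + 1) * (2 * (n : ℂ) + 3)) := by ring
    rw [hcast1, hcast2, hstep, ← hw2, h1, ← pow_mul,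
      show 2 * (n + 1) = (2 * n + 1) + 1 from by ring, pow_succ]
    field_simp
    have he1' : (n : ℂ) * 2 + 1 ≠ 0 := by rwa [mul_comm]
    have he2' : (n : ℂ) * 2 + 3 ≠ 0 := by rwa [mul_comm]
    field_simp
    ring
  · rw [hsplit]
    have hπ : (π : ℂ) ≠ 0 := by
      exact_mod_cast Complex.ofReal_ne_zero.mpr Real.pi_ne_zero
    field_simp
    ring
end

section
/- The function f(z) = (2i/π²)·(Log((1 + √z)/(1 − √z)))² maps the open unit disk into the region above the parabola {x + iy : 2y > x² − 1}; moreover for θ ∈ (0, 2π), the boundary values satisfy Re[f(e^{iθ})]² = 2·Im[f(e^{iθ})] + 1. -/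
open Complex Real

lemma stmt_14_re (L : ℂ) :
    ((2 * Complex.I / (π:ℂ)^2) * L^2).re = -4 * L.re * L.im / π^2 := by
  have hπ : (π:ℝ) ≠ 0 := Real.pi_ne_zero
  rw [show (2 * Complex.I / (π:ℂ)^2) = ((2/π^2 : ℝ) : ℂ) * Complex.I by push_cast; ring]
  simp only [Complex.mul_re, Complex.mul_im, Complex.ofReal_re, Complex.ofReal_im, Complex.I_re,
    Complex.I_im, pow_two]
  ring

lemma stmt_14_im (L : ℂ) :
    ((2 * Complex.I / (π:ℂ)^2) * L^2).im = 2 * (L.re^2 - L.im^2) / π^2 := by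
  have hπ : (π:ℝ) ≠ 0 := Real.pi_ne_zero
  rw [show (2 * Complex.I / (π:ℂ)^2) = ((2/π^2 : ℝ) : ℂ) * Complex.I by push_cast; ring]
  simp only [Complex.mul_re, Complex.mul_im, Complex.ofReal_re, Complex.ofReal_im, Complex.I_re,
    Complex.I_im, pow_two]
  ring

lemma stmt_14_qre (w : ℂ) :
    ((1+w)/(1-w)).re = (1 - Complex.normSq w) / Complex.normSq (1-w) := by
  rw [Complex.div_re]
  simp [Complex.normSq_apply]
  ring

/-- f(z) = (2i/π²)·(Log((1+√z)/(1−√z)))² maps the open unit disk into the region above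
the parabola 2y = x² − 1, and on the boundary Re[f(e^{iθ})]² = 2 Im[f(e^{iθ})] + 1. -/
theorem stmt_14 (f : ℂ → ℂ)
    (hf : ∀ z, f z = (2 * Complex.I / (π : ℂ) ^ 2) *
        (Complex.log ((1 + z ^ (1 / 2 : ℂ)) / (1 - z ^ (1 / 2 : ℂ)))) ^ 2) :
    (∀ z ∈ Metric.ball (0 : ℂ) 1, 2 * (f z).im > (f z).re ^ 2 - 1) ∧
      ∀ θ ∈ Set.Ioo (0 : ℝ) (2 * π),
        (f (Complex.exp (θ * Complex.I))).re ^ 2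
          = 2 * (f (Complex.exp (θ * Complex.I))).im + 1 := by
  have hπ : (π:ℝ) ≠ 0 := Real.pi_ne_zero
  have hπ4 : (0:ℝ) < π^4 := by positivity
  constructor
  · intro z hz
    rw [Metric.mem_ball, dist_zero_right] at hz
    set w : ℂ := z ^ (1/2 : ℂ) with hw
    have hns : Complex.normSq w < 1 := by
      rcases eq_or_ne z 0 with rfl | hz0
      · have : w = 0 := by
          rw [hw, Complex.zero_cpow (by norm_num)]
        simp [this]
      · have habs : ‖w‖ = ‖z‖ ^ (1/2 : ℝ) := by
          rw [hw, Complex.norm_cpow_of_ne_zero hz0]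
          norm_num
        have h1 : ‖w‖ < 1 := by
          rw [habs]
          exact Real.rpow_lt_one (norm_nonneg _) (by simpa using hz) (by norm_num)
        have := Complex.sq_norm w
        nlinarith [norm_nonneg w]
    have hden : (1 : ℂ) - w ≠ 0 := by
      intro h
      have : w = 1 := by linear_combination -h
      rw [this] at hns; simp at hns
    set q : ℂ := (1 + w) / (1 - w) with hq
    have hqre : 0 < q.re := by
      rw [hq, stmt_14_qre]
      exact div_pos (by linarith) (Complex.normSq_pos.2 hden)
    have harg : |Complex.arg q| < π/2 :=
      Complex.abs_arg_lt_pi_div_two_iff.2 (Or.inl hqre)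
    set a : ℝ := (Complex.log q).re with ha
    set b : ℝ := (Complex.log q).im with hb
    have hb2 : b^2 < π^2/4 := by
      have hbeq : b = Complex.arg q := Complex.log_im q
      rw [hbeq]
      nlinarith [abs_nonneg (Complex.arg q), _root_.sq_abs (Complex.arg q)]
    rw [hf, stmt_14_re, stmt_14_im, ← hw, ← hq, ← ha, ← hb]
    have key : 0 < (π^2 - 4*b^2) * (4*a^2 + π^2) :=
      mul_pos (by linarith) (by positivity)
    have e1 : 2 * (2 * (a^2 - b^2) / π^2) - ((-4*a*b/π^2)^2 - 1)
        = (π^2 - 4*b^2) * (4*a^2 + π^2) / π^4 := by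
      field_simp
      ring
    have h2 := div_pos key hπ4
    rw [gt_iff_lt, ← sub_pos]
    linarith [e1]
  · intro θ hθ
    obtain ⟨hθ0, hθ2⟩ := hθ
    set z : ℂ := Complex.exp (θ * Complex.I) with hzdef
    have hz0 : z ≠ 0 := Complex.exp_ne_zero _
    have habs : ‖z‖ = 1 := by
      rw [hzdef, Complex.norm_exp]
      simp
    have hz1 : z ≠ 1 := by
      intro h
      rw [hzdef, Complex.exp_eq_one_iff] at h
      obtain ⟨n, hn⟩ := h
      have him : θ = n * (2 * π) := by
        have := congrArg Complex.im hn
        simpa using this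
      rw [him] at hθ0 hθ2
      have hn0 : (0:ℝ) < n := by nlinarith [Real.pi_pos]
      have hn1 : (n:ℝ) < 1 := by nlinarith [Real.pi_pos]
      have h3 : (0:ℤ) < n := by exact_mod_cast hn0
      have h4 : (n:ℤ) < 1 := by exact_mod_cast hn1
      omega
    set w : ℂ := z ^ (1/2 : ℂ) with hw
    have habsw : ‖w‖ = 1 := by
      rw [hw, Complex.norm_cpow_of_ne_zero hz0, habs]
      norm_num
    have hns : Complex.normSq w = 1 := by
      have := Complex.sq_norm w
      rw [habsw] at this
      nlinarith
    have hw2 : w * w = z := by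
      rw [hw, ← Complex.cpow_add _ _ hz0]
      norm_num
    have hne1 : w ≠ 1 := by
      intro h; rw [h, mul_one] at hw2; exact hz1 hw2.symm
    have hne2 : w ≠ -1 := by
      intro h; rw [h] at hw2; apply hz1; rw [← hw2]; ring
    have hden : (1:ℂ) - w ≠ 0 := by
      intro h; apply hne1; linear_combination -h
    have hnum : (1:ℂ) + w ≠ 0 := by
      intro h; apply hne2; linear_combination h
    set q : ℂ := (1 + w) / (1 - w) with hq
    have hq0 : q ≠ 0 := div_ne_zero hnum hden
    have hqre : q.re = 0 := by
      rw [hq, stmt_14_qre, hns]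
      simp
    set a : ℝ := (Complex.log q).re with ha
    set b : ℝ := (Complex.log q).im with hb
    have hb2 : b^2 = π^2/4 := by
      have hbarg : b = Complex.arg q := Complex.log_im q
      have him : q.im ≠ 0 := by
        intro h3; exact hq0 (Complex.ext hqre h3)
      rcases him.lt_or_gt with hl | hl
      · rw [hbarg, Complex.arg_eq_neg_pi_div_two_iff.2 ⟨hqre, hl⟩]; ring
      · rw [hbarg, Complex.arg_eq_pi_div_two_iff.2 ⟨hqre, hl⟩]; ring
    rw [hf, stmt_14_re, stmt_14_im, ← hw, ← hq, ← ha, ← hb]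
    field_simp
    linear_combination (16*a^2 + 4*π^2) * hb2
end
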